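/- Let E be a real normed vector space, T₀ > 0, ω₀ = 2π/T₀, γ : ℝ → E continuous with γ(t + T₀) = γ(t) for all t, and X : [0,∞) → E continuous with ‖X(t) − γ(t + s)‖ → 0 as t → ∞ for some s ∈ ℝ. Let g : E → ℂ be bounded and uniformly continuous. Then lim_{T→∞} (1/T) ∫₀^T g(X(t)) e^{−i ω₀ t} dt = e^{i ω₀ s} · c₁, where c₁ = (1/T₀) ∫₀^{T₀} g(γ(t)) e^{−i ω₀ t} dt. In particular, if c₁ ≠ 0, the argument of the Fourier average of g ∘ X equals ω₀ s + arg(c₁) modulo 2π, so the Fourier average determines the asymptotic phase of the trajectory X. -/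

import Mathlib

open Filter Topology Real MeasureTheory intervalIntegral


lemma cesaro_int {φ : ℝ → ℂ}
    (hInt : ∀ T : ℝ, 0 ≤ T → IntervalIntegrable φ volume 0 T)
    (h0 : Tendsto (fun t => ‖φ t‖) atTop (𝓝 0)) :
    Tendsto (fun T : ℝ => (1 / T) • ∫ t in (0:ℝ)..T, φ t) atTop (𝓝 0) := by
  rw [Metric.tendsto_nhds]
  intro ε hε
  obtain ⟨T₁, hT₁⟩ : ∃ T₁ : ℝ, 0 ≤ T₁ ∧ ∀ t ≥ T₁, ‖φ t‖ ≤ ε / 3 := by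
    have := (h0.eventually (eventually_le_nhds (by positivity : (0:ℝ) < ε/3))).exists_forall_of_atTop
    obtain ⟨a, ha⟩ := this
    exact ⟨max a 0, le_max_right _ _, fun t ht => ha t (le_trans (le_max_left _ _) ht)⟩
  set M := ‖∫ t in (0:ℝ)..T₁, φ t‖ with hM
  filter_upwards [eventually_ge_atTop (max T₁ 1), eventually_ge_atTop (3 * M / ε)] with T hTge hTM
  have hT1 : T₁ ≤ T := le_trans (le_max_left _ _) hTge
  have hTpos : (0:ℝ) < T := lt_of_lt_of_le one_pos (le_trans (le_max_right _ _) hTge)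
  have hsplit : (∫ t in (0:ℝ)..T, φ t) = (∫ t in (0:ℝ)..T₁, φ t) + ∫ t in T₁..T, φ t := by
    rw [integral_add_adjacent_intervals (hInt T₁ hT₁.1)]
    exact ((hInt T hTpos.le).mono_set (by rw [Set.uIcc_of_le hT1, Set.uIcc_of_le hTpos.le]; exact Set.Icc_subset_Icc hT₁.1 le_rfl))
  have htail : ‖∫ t in T₁..T, φ t‖ ≤ ε / 3 * (T - T₁) := by
    have := intervalIntegral.norm_integral_le_of_norm_le_const (C := ε/3) (a := T₁) (b := T)
      (fun x hx => by rw [Set.uIoc_of_le hT1] at hx; exact hT₁.2 x hx.1.le)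
    rwa [abs_of_nonneg (by linarith)] at this
  rw [dist_zero_right]
  have : ‖(1 / T) • ∫ t in (0:ℝ)..T, φ t‖ = (1/T) * ‖∫ t in (0:ℝ)..T, φ t‖ := by
    rw [norm_smul, Real.norm_eq_abs, abs_of_pos (by positivity)]
  rw [this, hsplit]
  calc (1/T) * ‖(∫ t in (0:ℝ)..T₁, φ t) + ∫ t in T₁..T, φ t‖
      ≤ (1/T) * (M + ε / 3 * (T - T₁)) := by
        apply mul_le_mul_of_nonneg_left _ (by positivity)
        exact le_trans (norm_add_le _ _) (add_le_add le_rfl htail)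
    _ ≤ (1/T) * (M + ε / 3 * T) := by
        apply mul_le_mul_of_nonneg_left _ (by positivity)
        have : ε / 3 * (T - T₁) ≤ ε / 3 * T := by nlinarith [hT₁.1, hε]
        linarith
    _ = M / T + ε / 3 := by field_simp
    _ < ε := by
        have hMT : M / T ≤ ε / 3 := by
          rw [div_le_iff₀ hTpos]
          calc M = ε / 3 * (3 * M / ε) := by field_simp
            _ ≤ ε / 3 * T := by apply mul_le_mul_of_nonneg_left hTM (by positivity)
        linarith


lemma periodic_avg {p : ℝ → ℂ} {T₀ : ℝ} (hT₀ : 0 < T₀)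
    (hp : Function.Periodic p T₀) (hc : Continuous p) :
    Tendsto (fun T : ℝ => (1 / T) • ∫ t in (0:ℝ)..T, p t) atTop
      (𝓝 ((1 / T₀) • ∫ t in (0:ℝ)..T₀, p t)) := by
  obtain ⟨M, hM⟩ : ∃ M : ℝ, ∀ t, ‖p t‖ ≤ M := by
    obtain ⟨M, hM⟩ := (hp.isBounded_of_continuous hT₀.ne' hc).exists_norm_le
    exact ⟨M, fun t => hM _ (Set.mem_range_self t)⟩
  have hMnn : 0 ≤ M := le_trans (norm_nonneg _) (hM 0)
  set I : ℂ := ∫ t in (0:ℝ)..T₀, p t with hI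
  have hint : ∀ t₁ t₂ : ℝ, IntervalIntegrable p volume t₁ t₂ := fun t₁ t₂ =>
    hc.intervalIntegrable t₁ t₂
  have key : ∀ T : ℝ, 0 < T →
      ‖(1 / T) • (∫ t in (0:ℝ)..T, p t) - (1 / T₀) • I‖ ≤ (‖I‖ + M * T₀) / T := by
    intro T hT
    set n : ℤ := ⌊T / T₀⌋ with hn
    have hn0 : 0 ≤ n := Int.le_floor.2 (by simpa using div_nonneg hT.le hT₀.le)
    have hfl : (n : ℝ) * T₀ ≤ T ∧ T < ((n : ℝ) + 1) * T₀ := by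
      constructor
      · rw [← le_div_iff₀ hT₀]; exact Int.floor_le _
      · rw [← div_lt_iff₀ hT₀]; exact Int.lt_floor_add_one _
    have hsplit : (∫ t in (0:ℝ)..T, p t) = n • I + ∫ t in ((n:ℝ) * T₀)..T, p t := by
      rw [← integral_add_adjacent_intervals (hint 0 ((n:ℝ) * T₀)) (hint _ T)]
      congr 1
      have := hp.intervalIntegral_add_zsmul_eq n 0 hint
      simpa [zsmul_eq_mul] using this
    have hrem : ‖∫ t in ((n:ℝ) * T₀)..T, p t‖ ≤ M * T₀ := by
      have h1 : ‖∫ t in ((n:ℝ) * T₀)..T, p t‖ ≤ M * |T - (n:ℝ) * T₀| :=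
        intervalIntegral.norm_integral_le_of_norm_le_const (fun x _ => hM x)
      have h2 : |T - (n:ℝ) * T₀| ≤ T₀ := by
        rw [abs_of_nonneg (by linarith [hfl.1])]
        nlinarith [hfl.2]
      calc ‖∫ t in ((n:ℝ) * T₀)..T, p t‖ ≤ M * |T - (n:ℝ) * T₀| := h1
        _ ≤ M * T₀ := by nlinarith
    have heq : (1 / T) • (∫ t in (0:ℝ)..T, p t) - (1 / T₀) • I
        = ((n : ℝ) / T - 1 / T₀) • I + (1 / T) • ∫ t in ((n:ℝ) * T₀)..T, p t := by
      rw [hsplit]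
      simp only [Complex.real_smul, zsmul_eq_mul, smul_add]
      push_cast
      ring
    rw [heq]
    have hd : |(n : ℝ) / T - 1 / T₀| ≤ 1 / T := by
      rw [abs_le]
      constructor
      · have h2 : 1/T₀ ≤ ((n:ℝ)+1)/T := by
          rw [div_le_div_iff₀ hT₀ hT]
          nlinarith [hfl.2]
        have h1 : ((n:ℝ)+1)/T = (n:ℝ)/T + 1/T := by ring
        rw [h1] at h2
        linarith
      · have : (n:ℝ)/T ≤ 1/T₀ := by
          rw [div_le_div_iff₀ hT hT₀]
          nlinarith [hfl.1]
        have h3 : (0:ℝ) < 1/T := by positivity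
        linarith
    calc ‖((n : ℝ) / T - 1 / T₀) • I + (1 / T) • ∫ t in ((n:ℝ) * T₀)..T, p t‖
        ≤ ‖((n : ℝ) / T - 1 / T₀) • I‖ + ‖(1 / T) • ∫ t in ((n:ℝ) * T₀)..T, p t‖ :=
          norm_add_le _ _
      _ ≤ (1/T) * ‖I‖ + (1/T) * (M * T₀) := by
          apply add_le_add
          · rw [norm_smul, Real.norm_eq_abs]
            exact mul_le_mul_of_nonneg_right hd (norm_nonneg _)
          · rw [norm_smul, Real.norm_eq_abs, abs_of_pos (by positivity)]
            exact mul_le_mul_of_nonneg_left hrem (by positivity)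
      _ = (‖I‖ + M * T₀) / T := by field_simp
  have hbound : Tendsto (fun T : ℝ => (‖I‖ + M * T₀) / T) atTop (𝓝 0) :=
    tendsto_const_nhds.div_atTop tendsto_id
  have h1 : Tendsto (fun T : ℝ => (1 / T) • (∫ t in (0:ℝ)..T, p t) - (1 / T₀) • I) atTop (𝓝 0) := by
    apply squeeze_zero_norm' _ hbound
    filter_upwards [eventually_gt_atTop 0] with T hT using key T hT
  have h2 := h1.add_const ((1 / T₀) • I)
  have h3 : (fun T : ℝ => ((1 / T) • (∫ t in (0:ℝ)..T, p t) - (1 / T₀) • I) + (1 / T₀) • I)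
      = fun T : ℝ => (1 / T) • ∫ t in (0:ℝ)..T, p t := by
    funext T; abel
  rw [h3, zero_add] at h2
  exact h2


/-- If the trajectory `X` converges to the periodic trajectory `γ` with asymptotic phase
shift `s`, then for a bounded uniformly continuous observable `g`, the Fourier average of
`g ∘ X` at the frequency `ω₀ = 2π/T₀` equals `exp (i ω₀ s) · c₁`, where `c₁` is the first
Fourier coefficient of `g ∘ γ`. Hence the Fourier average determines the asymptotic phase. -/
theorem stmt6 {E : Type*} [NormedAddCommGroup E] [NormedSpace ℝ E]
    (T₀ : ℝ) (hT₀ : 0 < T₀) (ω₀ : ℝ) (hω₀ : ω₀ = 2 * π / T₀)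
    (γ : ℝ → E) (hγc : Continuous γ) (hγp : ∀ t, γ (t + T₀) = γ t)
    (X : ℝ → E) (hXc : ContinuousOn X (Set.Ici (0:ℝ))) (s : ℝ)
    (hs : Tendsto (fun t => ‖X t - γ (t + s)‖) atTop (𝓝 0))
    (g : E → ℂ) (hgb : ∃ C : ℝ, ∀ x, ‖g x‖ ≤ C) (hgu : UniformContinuous g) :
    Tendsto (fun T : ℝ =>
        (1 / T) • ∫ t in (0:ℝ)..T, g (X t) * Complex.exp (-Complex.I * ω₀ * t))
      atTop
      (𝓝 (Complex.exp (Complex.I * ω₀ * s) *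
        ((1 / T₀) • ∫ t in (0:ℝ)..T₀, g (γ t) * Complex.exp (-Complex.I * ω₀ * t)))) := by
  have hω₀T₀ : ω₀ * T₀ = 2 * π := by rw [hω₀]; field_simp
  set e : ℝ → ℂ := fun t => Complex.exp (-Complex.I * ω₀ * t) with he
  have hec : Continuous e := by fun_prop
  have henorm : ∀ t : ℝ, ‖e t‖ = 1 := by
    intro t
    simp only [he, Complex.norm_exp]
    norm_num [Complex.mul_re]
  set c : ℂ := Complex.exp (Complex.I * ω₀ * s) with hc
  set p : ℝ → ℂ := fun t => g (γ t) * e t with hpdef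
  have hpc : Continuous p := (hgu.continuous.comp hγc).mul hec
  have h2 : ((ω₀ : ℂ)) * ((T₀ : ℂ)) = 2 * (π : ℂ) := by exact_mod_cast hω₀T₀
  have hexpT : Complex.exp (-Complex.I * ω₀ * T₀) = 1 := by
    have h : (-Complex.I * ω₀ * T₀ : ℂ) = -(2 * (π : ℂ) * Complex.I) := by
      linear_combination (-Complex.I) * h2
    rw [h, Complex.exp_neg, Complex.exp_two_pi_mul_I, inv_one]
  have hp : Function.Periodic p T₀ := by
    intro t
    show g (γ (t + T₀)) * e (t + T₀) = g (γ t) * e t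
    rw [hγp]
    congr 1
    show Complex.exp (-Complex.I * ω₀ * ((t + T₀ : ℝ) : ℂ)) = Complex.exp (-Complex.I * ω₀ * t)
    rw [show (-Complex.I * ω₀ * ((t + T₀ : ℝ) : ℂ) : ℂ)
        = (-Complex.I * ω₀ * t) + (-Complex.I * ω₀ * T₀) by push_cast; ring,
      Complex.exp_add, hexpT, mul_one]
  set q : ℝ → ℂ := fun t => p (t + s) with hqdef
  have hq : Function.Periodic q T₀ := by
    intro t
    show p (t + T₀ + s) = p (t + s)
    rw [show t + T₀ + s = (t + s) + T₀ by ring]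
    exact hp (t + s)
  have hqc : Continuous q := hpc.comp (by continuity)
  -- the key exponential identity
  have hkey : ∀ t : ℝ, c * q t = g (γ (t + s)) * e t := by
    intro t
    show c * (g (γ (t + s)) * e (t + s)) = g (γ (t + s)) * e t
    rw [mul_comm c, mul_assoc]
    congr 1
    show e (t + s) * c = e t
    rw [hc, he]
    rw [← Complex.exp_add]
    congr 1
    push_cast
    ring
  -- integrability of f
  set f : ℝ → ℂ := fun t => g (X t) * e t with hfdef
  have hfInt : ∀ T : ℝ, 0 ≤ T → IntervalIntegrable f volume 0 T := by
    intro T hT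
    apply ContinuousOn.intervalIntegrable
    apply ContinuousOn.mul
    · exact hgu.continuous.comp_continuousOn
        (hXc.mono (by rw [Set.uIcc_of_le hT]; exact Set.Icc_subset_Ici_self))
    · exact hec.continuousOn
  set φ : ℝ → ℂ := fun t => f t - c * q t with hφdef
  have hφInt : ∀ T : ℝ, 0 ≤ T → IntervalIntegrable φ volume 0 T := fun T hT =>
    (hfInt T hT).sub ((continuous_const.mul hqc).intervalIntegrable 0 T)
  -- φ tends to 0 in norm
  have hφnorm : ∀ t : ℝ, ‖φ t‖ = ‖g (X t) - g (γ (t + s))‖ := by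
    intro t
    have : φ t = (g (X t) - g (γ (t + s))) * e t := by
      show f t - c * q t = _
      rw [hkey t]
      show g (X t) * e t - _ = _
      ring
    rw [this, norm_mul, henorm, mul_one]
  have hφ0 : Tendsto (fun t => ‖φ t‖) atTop (𝓝 0) := by
    rw [Metric.tendsto_nhds] at hs ⊢
    intro ε hε
    obtain ⟨δ, hδ, hδ'⟩ := Metric.uniformContinuous_iff.1 hgu ε hε
    filter_upwards [hs δ hδ] with t ht
    rw [Real.dist_eq, sub_zero, abs_of_nonneg (norm_nonneg _)] at ht
    have hd : dist (X t) (γ (t + s)) < δ := by rwa [dist_eq_norm]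
    have := hδ' hd
    rw [Real.dist_eq, sub_zero, abs_of_nonneg (norm_nonneg _), hφnorm t]
    rwa [dist_eq_norm] at this
  -- averages
  have hA : Tendsto (fun T : ℝ => (1 / T) • ∫ t in (0:ℝ)..T, φ t) atTop (𝓝 0) :=
    cesaro_int hφInt hφ0
  have hIq : (∫ t in (0:ℝ)..T₀, q t) = ∫ t in (0:ℝ)..T₀, p t := by
    show (∫ t in (0:ℝ)..T₀, p (t + s)) = _
    rw [intervalIntegral.integral_comp_add_right, zero_add, add_comm T₀ s]
    simpa using hp.intervalIntegral_add_eq s 0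
  have hB : Tendsto (fun T : ℝ => (1 / T) • ∫ t in (0:ℝ)..T, q t) atTop
      (𝓝 ((1 / T₀) • ∫ t in (0:ℝ)..T₀, p t)) := by
    have := periodic_avg hT₀ hq hqc
    rwa [hIq] at this
  have hB' : Tendsto (fun T : ℝ => c * ((1 / T) • ∫ t in (0:ℝ)..T, q t)) atTop
      (𝓝 (c * ((1 / T₀) • ∫ t in (0:ℝ)..T₀, p t))) := hB.const_mul c
  have hsum := hA.add hB'
  rw [zero_add] at hsum
  apply hsum.congr'
  filter_upwards [eventually_ge_atTop (0:ℝ)] with T hT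
  have hqInt : IntervalIntegrable (fun t => c * q t) volume 0 T :=
    (continuous_const.mul hqc).intervalIntegrable 0 T
  have : (∫ t in (0:ℝ)..T, f t) = (∫ t in (0:ℝ)..T, φ t) + ∫ t in (0:ℝ)..T, c * q t := by
    rw [← intervalIntegral.integral_add (hφInt T hT) hqInt]
    congr 1
    funext t
    show f t = f t - c * q t + c * q t
    ring
  show (1 / T) • (∫ t in (0:ℝ)..T, φ t) + c * ((1 / T) • ∫ t in (0:ℝ)..T, q t)
      = (1 / T) • ∫ t in (0:ℝ)..T, f t
  rw [this, smul_add]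
  congr 1
  rw [intervalIntegral.integral_const_mul, mul_smul_comm]
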